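/- Let (F₁, F₂) and (G₁, G₂) be the CHFIS pairs, with the same parameters α_{n,m}, β_{n,m}, γ_{n,m}, for generalized interpolation data Δ = {(x_i, y_j, z_{i,j}, t_{i,j})} and Δ* = {(x*_i, y*_j, z_{i,j}, t_{i,j})} respectively, where the knots satisfy the invariance-of-ratio condition and S* ⊆ S. Suppose M̄ ≥ 0 and δ ∈ (0,1] are such that |F₁(X) − F₁(X̄)| ≤ M̄ · d_M(X,X̄)^δ and |F₂(X) − F₂(X̄)| ≤ M̄ · d_M(X,X̄)^δ for all X, X̄ ∈ S. Then sup_{(x,y) ∈ S*} |F₁(x,y) − G₁(x,y)| ≤ M̄ · [2βγ/((1−α)(1−γ)) + (1+α)/(1−α)] · max{ (|x_n − x*_n| + |y_m − y*_m|)^δ : 0 ≤ n ≤ N, 0 ≤ m ≤ M }, where α = max_{n,m}|α_{n,m}|, β = max_{n,m}|β_{n,m}|, γ = max_{n,m}|γ_{n,m}|. -/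

import Mathlib

open Real Set

noncomputable section

/-- `z_eva` (resp. `t_eva`) from the paper: `z N M - z N 0 - z 0 M + z 0 0`. -/
def eva (N M : ℕ) (z : ℕ → ℕ → ℝ) : ℝ := z N M - z N 0 - z 0 M + z 0 0

/-- The coefficient `g_{n,m}` determined by the join-up conditions. -/
def gCoef (N M : ℕ) (x y : ℕ → ℝ) (z t : ℕ → ℕ → ℝ) (a b : ℕ → ℕ → ℝ) (n m : ℕ) : ℝ :=
  (z (n-1) (m-1) - z (n-1) m - z n (m-1) + z n m
    - a n m * eva N M z - b n m * eva N M t) / ((x 0 - x N) * (y 0 - y M))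

/-- The coefficient `e_{n,m}`. -/
def eCoef (N M : ℕ) (x y : ℕ → ℝ) (z t : ℕ → ℕ → ℝ) (a b : ℕ → ℕ → ℝ) (n m : ℕ) : ℝ :=
  (z (n-1) (m-1) - z n (m-1) - a n m * (z 0 0 - z N 0) - b n m * (t 0 0 - t N 0)
    - gCoef N M x y z t a b n m * (x 0 - x N) * y 0) / (x 0 - x N)

/-- The coefficient `f_{n,m}`. -/
def fCoef (N M : ℕ) (x y : ℕ → ℝ) (z t : ℕ → ℕ → ℝ) (a b : ℕ → ℕ → ℝ) (n m : ℕ) : ℝ :=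
  (z (n-1) (m-1) - z (n-1) m - a n m * (z 0 0 - z 0 M) - b n m * (t 0 0 - t 0 M)
    - gCoef N M x y z t a b n m * (y 0 - y M) * x 0) / (y 0 - y M)

/-- The coefficient `k_{n,m}`. -/
def kCoef (N M : ℕ) (x y : ℕ → ℝ) (z t : ℕ → ℕ → ℝ) (a b : ℕ → ℕ → ℝ) (n m : ℕ) : ℝ :=
  z n m - eCoef N M x y z t a b n m * x N - fCoef N M x y z t a b n m * y M
    - a n m * z N M - b n m * t N M - gCoef N M x y z t a b n m * x N * y M

/-- `p_{n,m}(X,Y) = e_{n,m} X + f_{n,m} Y + g_{n,m} X Y + k_{n,m}`. -/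
def pMap (N M : ℕ) (x y : ℕ → ℝ) (z t : ℕ → ℕ → ℝ) (a b : ℕ → ℕ → ℝ) (n m : ℕ)
    (X Y : ℝ) : ℝ :=
  eCoef N M x y z t a b n m * X + fCoef N M x y z t a b n m * Y
    + gCoef N M x y z t a b n m * X * Y + kCoef N M x y z t a b n m

/-- `q_{n,m}(X,Y) = ẽ_{n,m} X + f̃_{n,m} Y + g̃_{n,m} X Y + k̃_{n,m}`; it is `p` built from the
data `t` with parameters `γ` and `0`. -/
def qMap (N M : ℕ) (x y : ℕ → ℝ) (t : ℕ → ℕ → ℝ) (c : ℕ → ℕ → ℝ) (n m : ℕ) (X Y : ℝ) : ℝ :=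
  pMap N M x y t t c (fun _ _ => 0) n m X Y

/-- `φ_n` (resp. `ψ_m`): the affine map of `[x₀, x_N]` onto `[x_{n-1}, x_n]`. -/
def phiMap (N : ℕ) (x : ℕ → ℝ) (n : ℕ) (X : ℝ) : ℝ :=
  x (n-1) + (x n - x (n-1)) * (X - x 0) / (x N - x 0)

/-- Validity of generalized interpolation data: `N, M ≥ 1`, strictly increasing knots,
`|α_{n,m}| < 1` and `|β_{n,m}| + |γ_{n,m}| < 1`. -/
structure DataOK (N M : ℕ) (x y : ℕ → ℝ) (a b c : ℕ → ℕ → ℝ) : Prop where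
  hN : 1 ≤ N
  hM : 1 ≤ M
  hx : ∀ i < N, x i < x (i+1)
  hy : ∀ j < M, y j < y (j+1)
  ha : ∀ n m, 1 ≤ n → n ≤ N → 1 ≤ m → m ≤ M → |a n m| < 1
  hbc : ∀ n m, 1 ≤ n → n ≤ N → 1 ≤ m → m ≤ M → |b n m| + |c n m| < 1

/-- `(F₁, F₂)` is the CHFIS pair for the generalized interpolation data. -/
def IsCHFIS (N M : ℕ) (x y : ℕ → ℝ) (z t : ℕ → ℕ → ℝ) (a b c : ℕ → ℕ → ℝ)
    (F₁ F₂ : ℝ → ℝ → ℝ) : Prop :=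
  ContinuousOn (fun P : ℝ × ℝ => F₁ P.1 P.2) (Icc (x 0) (x N) ×ˢ Icc (y 0) (y M)) ∧
  ContinuousOn (fun P : ℝ × ℝ => F₂ P.1 P.2) (Icc (x 0) (x N) ×ˢ Icc (y 0) (y M)) ∧
  (∀ i ≤ N, ∀ j ≤ M, F₁ (x i) (y j) = z i j ∧ F₂ (x i) (y j) = t i j) ∧
  ∀ n m, 1 ≤ n → n ≤ N → 1 ≤ m → m ≤ M →
    ∀ X ∈ Icc (x 0) (x N), ∀ Y ∈ Icc (y 0) (y M),
      F₁ (phiMap N x n X) (phiMap M y m Y)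
        = a n m * F₁ X Y + b n m * F₂ X Y + pMap N M x y z t a b n m X Y ∧
      F₂ (phiMap N x n X) (phiMap M y m Y)
        = c n m * F₂ X Y + qMap N M x y t c n m X Y

/-- The invariance-of-ratio condition between the knots `x, y` and the knots `xs, ys`. -/
def RatioInv (N M : ℕ) (x y xs ys : ℕ → ℝ) : Prop :=
  (∀ n, 1 ≤ n → n ≤ N → (x 0 - x N) / (xs 0 - xs N) = (x (n-1) - x n) / (xs (n-1) - xs n)) ∧
  (∀ m, 1 ≤ m → m ≤ M → (y 0 - y M) / (ys 0 - ys M) = (y (m-1) - y m) / (ys (m-1) - ys m))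

/-- `T : [x₀, x_N] → [xs₀, xs_N]` is the cell-wise affine transfer map, sending
`[x_{n-1}, x_n]` affinely onto `[xs_{n-1}, xs_n]` (one coordinate of `R` resp. `K`). -/
def IsTransfer (N : ℕ) (x xs : ℕ → ℝ) (T : ℝ → ℝ) : Prop :=
  ∀ n, 1 ≤ n → n ≤ N → ∀ X ∈ Icc (x (n-1)) (x n),
    T X = xs (n-1) + (xs n - xs (n-1)) * (X - x (n-1)) / (x n - x (n-1))

/-- `max { |a n m| : 1 ≤ n ≤ N, 1 ≤ m ≤ M }` (as an `sSup`). -/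
def supParam (N M : ℕ) (a : ℕ → ℕ → ℝ) : ℝ :=
  sSup {v : ℝ | ∃ n m, 1 ≤ n ∧ n ≤ N ∧ 1 ≤ m ∧ m ≤ M ∧ v = |a n m|}

/-- `max { (|x_n - xs_n| + |y_m - ys_m|)^δ : 0 ≤ n ≤ N, 0 ≤ m ≤ M }` (as an `sSup`). -/
def supKnotDiff (N M : ℕ) (x xs y ys : ℕ → ℝ) (d : ℝ) : ℝ :=
  sSup {v : ℝ | ∃ n m, n ≤ N ∧ m ≤ M ∧ v = (|x n - xs n| + |y m - ys m|) ^ d}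

/-- `max { |z_{n,m} - zs_{n,m}| : 0 ≤ n ≤ N, 0 ≤ m ≤ M }` (as an `sSup`). -/
def supValDiff (N M : ℕ) (z zs : ℕ → ℕ → ℝ) : ℝ :=
  sSup {v : ℝ | ∃ n m, n ≤ N ∧ m ≤ M ∧ v = |z n m - zs n m|}

/-- `max { |z_{i,j} - z_{k,l}| : 0 ≤ i,j,k,l ≤ N }` (as an `sSup`). -/
def supPairDiff (N : ℕ) (z : ℕ → ℕ → ℝ) : ℝ :=
  sSup {v : ℝ | ∃ i j k l, i ≤ N ∧ j ≤ N ∧ k ≤ N ∧ l ≤ N ∧ v = |z i j - z k l|}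

/-- stability of CHFIS with respect to perturbation of the independent
variables (knots), under the invariance-of-ratio condition and `S* ⊆ S`. -/
lemma corner00 (N M : ℕ) (x y : ℕ → ℝ) (z t : ℕ → ℕ → ℝ) (a b : ℕ → ℕ → ℝ) (n m : ℕ)
    (hx : x 0 - x N ≠ 0) (hy : y 0 - y M ≠ 0) :
    pMap N M x y z t a b n m (x 0) (y 0) = z (n-1) (m-1) - a n m * z 0 0 - b n m * t 0 0 := by
  simp only [pMap, eCoef, fCoef, gCoef, kCoef, eva]
  field_simp
  ring

lemma cornerN0 (N M : ℕ) (x y : ℕ → ℝ) (z t : ℕ → ℕ → ℝ) (a b : ℕ → ℕ → ℝ) (n m : ℕ)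
    (hx : x 0 - x N ≠ 0) (hy : y 0 - y M ≠ 0) :
    pMap N M x y z t a b n m (x N) (y 0) = z n (m-1) - a n m * z N 0 - b n m * t N 0 := by
  simp only [pMap, eCoef, fCoef, gCoef, kCoef, eva]
  field_simp
  ring

lemma corner0M (N M : ℕ) (x y : ℕ → ℝ) (z t : ℕ → ℕ → ℝ) (a b : ℕ → ℕ → ℝ) (n m : ℕ)
    (hx : x 0 - x N ≠ 0) (hy : y 0 - y M ≠ 0) :
    pMap N M x y z t a b n m (x 0) (y M) = z (n-1) m - a n m * z 0 M - b n m * t 0 M := by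
  simp only [pMap, eCoef, fCoef, gCoef, kCoef, eva]
  field_simp
  ring

lemma cornerNM (N M : ℕ) (x y : ℕ → ℝ) (z t : ℕ → ℕ → ℝ) (a b : ℕ → ℕ → ℝ) (n m : ℕ)
    (hx : x 0 - x N ≠ 0) (hy : y 0 - y M ≠ 0) :
    pMap N M x y z t a b n m (x N) (y M) = z n m - a n m * z N M - b n m * t N M := by
  simp only [pMap, eCoef, fCoef, gCoef, kCoef, eva]
  field_simp
  ring
lemma bilinear_ext (e f g k e' f' g' k' x0 xN y0 yM : ℝ) (hx : xN - x0 ≠ 0) (hy : yM - y0 ≠ 0)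
    (h00 : e*x0+f*y0+g*x0*y0+k = e'*x0+f'*y0+g'*x0*y0+k')
    (hN0 : e*xN+f*y0+g*xN*y0+k = e'*xN+f'*y0+g'*xN*y0+k')
    (h0M : e*x0+f*yM+g*x0*yM+k = e'*x0+f'*yM+g'*x0*yM+k')
    (hNM : e*xN+f*yM+g*xN*yM+k = e'*xN+f'*yM+g'*xN*yM+k')
    (X Y : ℝ) : e*X+f*Y+g*X*Y+k = e'*X+f'*Y+g'*X*Y+k' := by
  have key : (xN-x0)*(yM-y0)*(e*X+f*Y+g*X*Y+k) = (xN-x0)*(yM-y0)*(e'*X+f'*Y+g'*X*Y+k') := by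
    linear_combination ((xN-X)*(yM-Y))*h00 + ((X-x0)*(yM-Y))*hN0 + ((xN-X)*(Y-y0))*h0M
      + ((X-x0)*(Y-y0))*hNM
  exact mul_left_cancel₀ (mul_ne_zero hx hy) key

lemma phi_comp (r A B As Bs p ps q qs X : ℝ) (hr0 : r ≠ 0) (hABs : Bs - As ≠ 0)
    (h1 : B - A = r * (Bs - As)) (h2 : q - p = r * (qs - ps)) (h3 : p - A = r * (ps - As)) :
    As + ((p + (q - p) * (X - A) / (B - A)) - A) * ((Bs - As)/(B - A))
      = ps + (qs - ps) * ((As + (X - A) * ((Bs - As)/(B - A))) - As) / (Bs - As) := by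
  have hq : q = p + r*(qs - ps) := by linarith
  subst hq
  have hp : p = A + r*(ps - As) := by linarith
  subst hp
  have hB : B = A + r*(Bs - As) := by linarith
  subst hB
  have hB : A + r * (Bs - As) - A ≠ 0 := by
    simpa using mul_ne_zero hr0 hABs
  field_simp
  ring

lemma pMap_comp (N M : ℕ) (x y xs ys : ℕ → ℝ) (z t : ℕ → ℕ → ℝ) (a b : ℕ → ℕ → ℝ) (n m : ℕ)
    (hx : x 0 - x N ≠ 0) (hy : y 0 - y M ≠ 0) (hxs : xs 0 - xs N ≠ 0) (hys : ys 0 - ys M ≠ 0)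
    (X Y : ℝ) :
    pMap N M xs ys z t a b n m (xs 0 + (X - x 0) * ((xs N - xs 0)/(x N - x 0)))
      (ys 0 + (Y - y 0) * ((ys M - ys 0)/(y M - y 0)))
    = pMap N M x y z t a b n m X Y := by
  have hxN : x N - x 0 ≠ 0 := fun h => hx (by linarith [sub_eq_zero.mp h])
  have hyM : y M - y 0 ≠ 0 := fun h => hy (by linarith [sub_eq_zero.mp h])
  set ir := (xs N - xs 0)/(x N - x 0) with hir
  set iry := (ys M - ys 0)/(y M - y 0) with hiry
  set e' := eCoef N M xs ys z t a b n m with he'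
  set f' := fCoef N M xs ys z t a b n m with hf'
  set g' := gCoef N M xs ys z t a b n m with hg'
  set k' := kCoef N M xs ys z t a b n m with hk'
  set cx := xs 0 - x 0 * ir with hcx
  set cy := ys 0 - y 0 * iry with hcy
  set E := e'*ir + g'*ir*cy with hE
  set F := f'*iry + g'*cx*iry with hF
  set G := g'*ir*iry with hG
  set K := e'*cx + f'*cy + g'*cx*cy + k' with hK
  have expand : ∀ U V : ℝ,
      pMap N M xs ys z t a b n m (xs 0 + (U - x 0) * ir) (ys 0 + (V - y 0) * iry)
        = E*U + F*V + G*U*V + K := by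
    intro U V
    simp only [pMap, hE, hF, hG, hK, hcx, hcy, ← he', ← hf', ← hg', ← hk']
    ring
  have hL0 : xs 0 + (x 0 - x 0) * ir = xs 0 := by ring
  have hLN : xs 0 + (x N - x 0) * ir = xs N := by rw [hir]; field_simp; ring
  have hLy0 : ys 0 + (y 0 - y 0) * iry = ys 0 := by ring
  have hLyM : ys 0 + (y M - y 0) * iry = ys M := by rw [hiry]; field_simp; ring
  have h00 : pMap N M x y z t a b n m (x 0) (y 0)
      = E*(x 0) + F*(y 0) + G*(x 0)*(y 0) + K := by
    have h := expand (x 0) (y 0); rw [hL0, hLy0] at h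
    rw [corner00 N M x y z t a b n m hx hy, ← h, corner00 N M xs ys z t a b n m hxs hys]
  have hN0 : pMap N M x y z t a b n m (x N) (y 0)
      = E*(x N) + F*(y 0) + G*(x N)*(y 0) + K := by
    have h := expand (x N) (y 0); rw [hLN, hLy0] at h
    rw [cornerN0 N M x y z t a b n m hx hy, ← h, cornerN0 N M xs ys z t a b n m hxs hys]
  have h0M : pMap N M x y z t a b n m (x 0) (y M)
      = E*(x 0) + F*(y M) + G*(x 0)*(y M) + K := by
    have h := expand (x 0) (y M); rw [hL0, hLyM] at h
    rw [corner0M N M x y z t a b n m hx hy, ← h, corner0M N M xs ys z t a b n m hxs hys]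
  have hNM : pMap N M x y z t a b n m (x N) (y M)
      = E*(x N) + F*(y M) + G*(x N)*(y M) + K := by
    have h := expand (x N) (y M); rw [hLN, hLyM] at h
    rw [cornerNM N M x y z t a b n m hx hy, ← h, cornerNM N M xs ys z t a b n m hxs hys]
  rw [expand X Y]
  simp only [pMap] at h00 hN0 h0M hNM ⊢
  exact (bilinear_ext _ _ _ _ E F G K (x 0) (x N) (y 0) (y M) hxN hyM h00 hN0 h0M hNM X Y).symm

lemma knot_le (N : ℕ) (x : ℕ → ℝ) (hx : ∀ i < N, x i < x (i+1)) :
    ∀ i j, i ≤ j → j ≤ N → x i ≤ x j := by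
  intro i j hij hjN
  induction j with
  | zero => simp [Nat.le_zero.mp hij]
  | succ n ih =>
    rcases Nat.lt_or_ge i (n+1) with h | h
    · exact le_trans (ih (by omega) (by omega)) (le_of_lt (hx n (by omega)))
    · have : i = n + 1 := by omega
      simp [this]

lemma knot_lt (N : ℕ) (x : ℕ → ℝ) (hx : ∀ i < N, x i < x (i+1)) :
    ∀ i j, i < j → j ≤ N → x i < x j := by
  intro i j hij hjN
  have h1 : x i ≤ x (j-1) := knot_le N x hx i (j-1) (by omega) (by omega)
  have h2 : x (j-1) < x ((j-1)+1) := hx (j-1) (by omega)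
  have : (j-1)+1 = j := by omega
  rw [this] at h2
  linarith

lemma exists_cell (N : ℕ) (x : ℕ → ℝ) (hx : ∀ i < N, x i < x (i+1)) (hN : 1 ≤ N) :
    ∀ X ∈ Icc (x 0) (x N), ∃ n, 1 ≤ n ∧ n ≤ N ∧ x (n-1) ≤ X ∧ X ≤ x n := by
  intro X hX
  obtain ⟨hX0, hXN⟩ := hX
  have main : ∀ k, 1 ≤ k → k ≤ N → X ≤ x k →
      ∃ n, 1 ≤ n ∧ n ≤ k ∧ x (n-1) ≤ X ∧ X ≤ x n := by
    intro k
    induction k with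
    | zero => omega
    | succ j ih =>
      intro _ hkN hXk
      rcases Nat.eq_zero_or_pos j with hj | hj
      · subst hj; exact ⟨1, le_refl _, le_refl _, by simpa using hX0, hXk⟩
      · rcases le_total X (x j) with h | h
        · obtain ⟨n, h1, h2, h3, h4⟩ := ih (by omega) (by omega) h
          exact ⟨n, h1, by omega, h3, h4⟩
        · exact ⟨j+1, by omega, le_refl _, by simpa using h, hXk⟩
  exact main N hN le_rfl hXN

lemma affine_abs_le (p q A B X : ℝ) (hA : A ≤ X) (hX : X ≤ B) :
    |p*X+q| ≤ max |p*A+q| |p*B+q| := by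
  rcases le_total 0 p with hp | hp
  · have h1 : p*A+q ≤ p*X+q := by nlinarith
    have h2 : p*X+q ≤ p*B+q := by nlinarith
    rw [abs_le]
    constructor
    · calc -(max |p*A+q| |p*B+q|) ≤ -|p*A+q| := by simp [le_max_left]
        _ ≤ p*A+q := neg_abs_le _
        _ ≤ p*X+q := h1
    · calc p*X+q ≤ p*B+q := h2
        _ ≤ |p*B+q| := le_abs_self _
        _ ≤ max |p*A+q| |p*B+q| := le_max_right _ _
  · have h1 : p*B+q ≤ p*X+q := by nlinarith
    have h2 : p*X+q ≤ p*A+q := by nlinarith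
    rw [abs_le]
    constructor
    · calc -(max |p*A+q| |p*B+q|) ≤ -|p*B+q| := by simp [le_max_right]
        _ ≤ p*B+q := neg_abs_le _
        _ ≤ p*X+q := h1
    · calc p*X+q ≤ p*A+q := h2
        _ ≤ |p*A+q| := le_abs_self _
        _ ≤ max |p*A+q| |p*B+q| := le_max_left _ _

lemma affine_mapsTo (A B As Bs X : ℝ) (hAB : A < B) (hs : As ≤ Bs)
    (hX : X ∈ Icc A B) : As + (X - A) * ((Bs - As)/(B - A)) ∈ Icc As Bs := by
  obtain ⟨h1, h2⟩ := hX
  have hBA : (0:ℝ) < B - A := by linarith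
  have hq : 0 ≤ (Bs - As)/(B - A) := div_nonneg (by linarith) hBA.le
  constructor
  · nlinarith [mul_nonneg (by linarith : (0:ℝ) ≤ X - A) hq]
  · have key : (X - A) * ((Bs - As)/(B - A)) ≤ (B - A) * ((Bs - As)/(B - A)) :=
      mul_le_mul_of_nonneg_right (by linarith) hq
    have : (B - A) * ((Bs - As)/(B - A)) = Bs - As := by field_simp
    linarith [key.trans_eq this]

lemma supParam_spec (N M : ℕ) (a : ℕ → ℕ → ℝ) (hN : 1 ≤ N) (hM : 1 ≤ M) :
    (∀ n m, 1 ≤ n → n ≤ N → 1 ≤ m → m ≤ M → |a n m| ≤ supParam N M a) ∧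
    (∃ n m, 1 ≤ n ∧ n ≤ N ∧ 1 ≤ m ∧ m ≤ M ∧ supParam N M a = |a n m|) := by
  set A := {v : ℝ | ∃ n m, 1 ≤ n ∧ n ≤ N ∧ 1 ≤ m ∧ m ≤ M ∧ v = |a n m|} with hA
  have hfin : A.Finite := by
    apply Set.Finite.subset (((Set.finite_Icc 1 N).prod (Set.finite_Icc 1 M)).image
      (fun p : ℕ × ℕ => |a p.1 p.2|))
    rintro v ⟨n, m, h1, h2, h3, h4, rfl⟩
    exact ⟨(n, m), ⟨⟨h1, h2⟩, ⟨h3, h4⟩⟩, rfl⟩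
  have hne : A.Nonempty := ⟨|a 1 1|, 1, 1, le_rfl, hN, le_rfl, hM, rfl⟩
  constructor
  · intro n m h1 h2 h3 h4
    exact le_csSup hfin.bddAbove ⟨n, m, h1, h2, h3, h4, rfl⟩
  · have := hne.csSup_mem hfin
    obtain ⟨n, m, h1, h2, h3, h4, h5⟩ := this
    exact ⟨n, m, h1, h2, h3, h4, h5⟩

lemma supKnotDiff_spec (N M : ℕ) (x xs y ys : ℕ → ℝ) (d : ℝ) :
    ∀ n m, n ≤ N → m ≤ M →
      (|x n - xs n| + |y m - ys m|) ^ d ≤ supKnotDiff N M x xs y ys d := by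
  intro n m h1 h2
  set A := {v : ℝ | ∃ n m, n ≤ N ∧ m ≤ M ∧ v = (|x n - xs n| + |y m - ys m|) ^ d} with hA
  have hfin : A.Finite := by
    apply Set.Finite.subset (((Set.finite_Icc 0 N).prod (Set.finite_Icc 0 M)).image
      (fun p : ℕ × ℕ => (|x p.1 - xs p.1| + |y p.2 - ys p.2|) ^ d))
    rintro v ⟨n, m, h1, h2, rfl⟩
    exact ⟨(n, m), ⟨⟨Nat.zero_le _, h1⟩, ⟨Nat.zero_le _, h2⟩⟩, rfl⟩
  exact le_csSup hfin.bddAbove ⟨n, m, h1, h2, rfl⟩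

lemma phiMap_inv (N : ℕ) (x : ℕ → ℝ) (hx : ∀ i < N, x i < x (i+1)) (hN : 1 ≤ N)
    (n : ℕ) (hn1 : 1 ≤ n) (hnN : n ≤ N) (Xh : ℝ) (h1 : x (n-1) ≤ Xh) (h2 : Xh ≤ x n) :
    ∃ X ∈ Icc (x 0) (x N), phiMap N x n X = Xh := by
  have hcell : x (n-1) < x n := by
    have := hx (n-1) (by omega)
    have he : (n-1)+1 = n := by omega
    rwa [he] at this
  have h0N : x 0 < x N := knot_lt N x hx 0 N (by omega) le_rfl
  refine ⟨x 0 + (Xh - x (n-1)) * ((x N - x 0)/(x n - x (n-1))), ?_, ?_⟩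
  · exact affine_mapsTo (x (n-1)) (x n) (x 0) (x N) Xh hcell h0N.le ⟨h1, h2⟩
  · simp only [phiMap]
    have hd : x n - x (n-1) ≠ 0 := by linarith
    have hD : x N - x 0 ≠ 0 := by linarith
    field_simp
    ring

lemma chfis_unique (N M : ℕ) (x y : ℕ → ℝ) (z t : ℕ → ℕ → ℝ) (a b c : ℕ → ℕ → ℝ)
    (hD : DataOK N M x y a b c) (F₁ F₂ H₁ H₂ : ℝ → ℝ → ℝ)
    (h1c : ContinuousOn (fun P : ℝ × ℝ => F₁ P.1 P.2 - H₁ P.1 P.2)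
      (Icc (x 0) (x N) ×ˢ Icc (y 0) (y M)))
    (h2c : ContinuousOn (fun P : ℝ × ℝ => F₂ P.1 P.2 - H₂ P.1 P.2)
      (Icc (x 0) (x N) ×ˢ Icc (y 0) (y M)))
    (hFeq : ∀ n m, 1 ≤ n → n ≤ N → 1 ≤ m → m ≤ M →
      ∀ X ∈ Icc (x 0) (x N), ∀ Y ∈ Icc (y 0) (y M),
        F₁ (phiMap N x n X) (phiMap M y m Y)
          = a n m * F₁ X Y + b n m * F₂ X Y + pMap N M x y z t a b n m X Y ∧
        F₂ (phiMap N x n X) (phiMap M y m Y)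
          = c n m * F₂ X Y + qMap N M x y t c n m X Y)
    (hHeq : ∀ n m, 1 ≤ n → n ≤ N → 1 ≤ m → m ≤ M →
      ∀ X ∈ Icc (x 0) (x N), ∀ Y ∈ Icc (y 0) (y M),
        H₁ (phiMap N x n X) (phiMap M y m Y)
          = a n m * H₁ X Y + b n m * H₂ X Y + pMap N M x y z t a b n m X Y ∧
        H₂ (phiMap N x n X) (phiMap M y m Y)
          = c n m * H₂ X Y + qMap N M x y t c n m X Y) :
    ∀ X ∈ Icc (x 0) (x N), ∀ Y ∈ Icc (y 0) (y M), F₁ X Y = H₁ X Y := by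
  have h0N : x 0 < x N := knot_lt N x hD.hx 0 N hD.hN (le_refl N)
  have h0M : y 0 < y M := knot_lt M y hD.hy 0 M hD.hM (le_refl M)
  set S : Set (ℝ × ℝ) := Icc (x 0) (x N) ×ˢ Icc (y 0) (y M) with hS
  have hScomp : IsCompact S := (isCompact_Icc).prod isCompact_Icc
  have hSne : S.Nonempty := ⟨(x 0, y 0), ⟨⟨le_rfl, h0N.le⟩, ⟨le_rfl, h0M.le⟩⟩⟩
  -- decomposition of any point of S
  have decomp : ∀ P ∈ S, ∃ n m, 1 ≤ n ∧ n ≤ N ∧ 1 ≤ m ∧ m ≤ M ∧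
      ∃ X ∈ Icc (x 0) (x N), ∃ Y ∈ Icc (y 0) (y M),
        phiMap N x n X = P.1 ∧ phiMap M y m Y = P.2 := by
    rintro P ⟨hP1, hP2⟩
    obtain ⟨n, hn1, hnN, ha1, ha2⟩ := exists_cell N x hD.hx hD.hN P.1 hP1
    obtain ⟨m, hm1, hmM, hb1, hb2⟩ := exists_cell M y hD.hy hD.hM P.2 hP2
    obtain ⟨X, hX, hXe⟩ := phiMap_inv N x hD.hx hD.hN n hn1 hnN P.1 ha1 ha2
    obtain ⟨Y, hY, hYe⟩ := phiMap_inv M y hD.hy hD.hM m hm1 hmM P.2 hb1 hb2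
    exact ⟨n, m, hn1, hnN, hm1, hmM, X, hX, Y, hY, hXe, hYe⟩
  -- step 1 : F₂ = H₂ on S
  have hF2 : ∀ P ∈ S, F₂ P.1 P.2 - H₂ P.1 P.2 = 0 := by
    obtain ⟨P, hPS, hPmax⟩ := hScomp.exists_isMaxOn hSne h2c.abs
    have hD0 : ∀ Q ∈ S, |F₂ Q.1 Q.2 - H₂ Q.1 Q.2| ≤ |F₂ P.1 P.2 - H₂ P.1 P.2| :=
      fun Q hQ => hPmax hQ
    obtain ⟨n, m, hn1, hnN, hm1, hmM, X, hX, Y, hY, hXe, hYe⟩ := decomp P hPS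
    have hXYS : (X, Y) ∈ S := ⟨hX, hY⟩
    have heqF := (hFeq n m hn1 hnN hm1 hmM X hX Y hY).2
    have heqH := (hHeq n m hn1 hnN hm1 hmM X hX Y hY).2
    have key : F₂ P.1 P.2 - H₂ P.1 P.2 = c n m * (F₂ X Y - H₂ X Y) := by
      rw [← hXe, ← hYe, heqF, heqH]; ring
    have hc : |c n m| < 1 := by
      have := hD.hbc n m hn1 hnN hm1 hmM
      have := abs_nonneg (b n m)
      linarith
    have hDle : |F₂ P.1 P.2 - H₂ P.1 P.2| ≤ 0 := by
      by_contra hpos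
      push_neg at hpos
      have h1 : |F₂ P.1 P.2 - H₂ P.1 P.2| = |c n m| * |F₂ X Y - H₂ X Y| := by
        rw [key, abs_mul]
      have h2 : |F₂ X Y - H₂ X Y| ≤ |F₂ P.1 P.2 - H₂ P.1 P.2| := hD0 (X, Y) hXYS
      nlinarith [abs_nonneg (c n m), abs_nonneg (F₂ X Y - H₂ X Y)]
    intro Q hQ
    have := hD0 Q hQ
    have := abs_nonneg (F₂ Q.1 Q.2 - H₂ Q.1 Q.2)
    have : |F₂ Q.1 Q.2 - H₂ Q.1 Q.2| = 0 := le_antisymm (le_trans (hD0 Q hQ) hDle)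
      (abs_nonneg _)
    exact abs_eq_zero.mp this
  -- step 2 : F₁ = H₁ on S
  have hF1 : ∀ P ∈ S, F₁ P.1 P.2 - H₁ P.1 P.2 = 0 := by
    obtain ⟨P, hPS, hPmax⟩ := hScomp.exists_isMaxOn hSne h1c.abs
    have hD0 : ∀ Q ∈ S, |F₁ Q.1 Q.2 - H₁ Q.1 Q.2| ≤ |F₁ P.1 P.2 - H₁ P.1 P.2| :=
      fun Q hQ => hPmax hQ
    obtain ⟨n, m, hn1, hnN, hm1, hmM, X, hX, Y, hY, hXe, hYe⟩ := decomp P hPS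
    have hXYS : (X, Y) ∈ S := ⟨hX, hY⟩
    have heqF := (hFeq n m hn1 hnN hm1 hmM X hX Y hY).1
    have heqH := (hHeq n m hn1 hnN hm1 hmM X hX Y hY).1
    have hzero : F₂ X Y - H₂ X Y = 0 := hF2 (X, Y) hXYS
    have key : F₁ P.1 P.2 - H₁ P.1 P.2 = a n m * (F₁ X Y - H₁ X Y) := by
      rw [← hXe, ← hYe, heqF, heqH]
      have : F₂ X Y = H₂ X Y := by linarith
      rw [this]; ring
    have ha : |a n m| < 1 := hD.ha n m hn1 hnN hm1 hmM
    have hDle : |F₁ P.1 P.2 - H₁ P.1 P.2| ≤ 0 := by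
      by_contra hpos
      push_neg at hpos
      have h1 : |F₁ P.1 P.2 - H₁ P.1 P.2| = |a n m| * |F₁ X Y - H₁ X Y| := by
        rw [key, abs_mul]
      have h2 : |F₁ X Y - H₁ X Y| ≤ |F₁ P.1 P.2 - H₁ P.1 P.2| := hD0 (X, Y) hXYS
      nlinarith [abs_nonneg (a n m), abs_nonneg (F₁ X Y - H₁ X Y)]
    intro Q hQ
    have : |F₁ Q.1 Q.2 - H₁ Q.1 Q.2| = 0 := le_antisymm (le_trans (hD0 Q hQ) hDle)
      (abs_nonneg _)
    exact abs_eq_zero.mp this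
  intro X hX Y hY
  have := hF1 (X, Y) ⟨hX, hY⟩
  simpa [sub_eq_zero] using this

theorem chfis_stability_indep (N M : ℕ) (x y xs ys : ℕ → ℝ) (z t : ℕ → ℕ → ℝ)
    (a b c : ℕ → ℕ → ℝ)
    (hD : DataOK N M x y a b c) (hDs : DataOK N M xs ys a b c)
    (hratio : RatioInv N M x y xs ys)
    (hsub : Icc (xs 0) (xs N) ×ˢ Icc (ys 0) (ys M) ⊆ Icc (x 0) (x N) ×ˢ Icc (y 0) (y M))
    (F₁ F₂ G₁ G₂ : ℝ → ℝ → ℝ)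
    (hF : IsCHFIS N M x y z t a b c F₁ F₂)
    (hG : IsCHFIS N M xs ys z t a b c G₁ G₂)
    (Mb δ : ℝ) (hMb : 0 ≤ Mb) (hδ : δ ∈ Set.Ioc (0:ℝ) 1)
    (hH1 : ∀ X ∈ Icc (x 0) (x N), ∀ Y ∈ Icc (y 0) (y M),
      ∀ X' ∈ Icc (x 0) (x N), ∀ Y' ∈ Icc (y 0) (y M),
        |F₁ X Y - F₁ X' Y'| ≤ Mb * (|X - X'| + |Y - Y'|) ^ δ)
    (hH2 : ∀ X ∈ Icc (x 0) (x N), ∀ Y ∈ Icc (y 0) (y M),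
      ∀ X' ∈ Icc (x 0) (x N), ∀ Y' ∈ Icc (y 0) (y M),
        |F₂ X Y - F₂ X' Y'| ≤ Mb * (|X - X'| + |Y - Y'|) ^ δ) :
    ∀ X ∈ Icc (xs 0) (xs N), ∀ Y ∈ Icc (ys 0) (ys M),
      |F₁ X Y - G₁ X Y| ≤
        Mb * (2 * supParam N M b * supParam N M c
              / ((1 - supParam N M a) * (1 - supParam N M c))
            + (1 + supParam N M a) / (1 - supParam N M a))
          * supKnotDiff N M x xs y ys δ := by
  -- basic knot facts
  have hx0N : x 0 < x N := knot_lt N x hD.hx 0 N hD.hN le_rfl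
  have hy0M : y 0 < y M := knot_lt M y hD.hy 0 M hD.hM le_rfl
  have hxs0N : xs 0 < xs N := knot_lt N xs hDs.hx 0 N hDs.hN le_rfl
  have hys0M : ys 0 < ys M := knot_lt M ys hDs.hy 0 M hDs.hM le_rfl
  have hxd : x 0 - x N ≠ 0 := by intro h; linarith [sub_eq_zero.mp h]
  have hyd : y 0 - y M ≠ 0 := by intro h; linarith [sub_eq_zero.mp h]
  have hxsd : xs 0 - xs N ≠ 0 := by intro h; linarith [sub_eq_zero.mp h]
  have hysd : ys 0 - ys M ≠ 0 := by intro h; linarith [sub_eq_zero.mp h]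
  have hxNd : x N - x 0 ≠ 0 := by intro h; linarith [sub_eq_zero.mp h]
  have hyMd : y M - y 0 ≠ 0 := by intro h; linarith [sub_eq_zero.mp h]
  have hxsNd : xs N - xs 0 ≠ 0 := by intro h; linarith [sub_eq_zero.mp h]
  have hysMd : ys M - ys 0 ≠ 0 := by intro h; linarith [sub_eq_zero.mp h]
  -- ratio relations
  have hr0 : (x 0 - x N)/(xs 0 - xs N) ≠ 0 := div_ne_zero hxd hxsd
  have hry0 : (y 0 - y M)/(ys 0 - ys M) ≠ 0 := div_ne_zero hyd hysd
  have hrN : x N - x 0 = (x 0 - x N)/(xs 0 - xs N) * (xs N - xs 0) := by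
    rw [div_mul_eq_mul_div, eq_div_iff hxsd]; ring
  have hryM : y M - y 0 = (y 0 - y M)/(ys 0 - ys M) * (ys M - ys 0) := by
    rw [div_mul_eq_mul_div, eq_div_iff hysd]; ring
  have hrc : ∀ n, 1 ≤ n → n ≤ N →
      x n - x (n-1) = (x 0 - x N)/(xs 0 - xs N) * (xs n - xs (n-1)) := by
    intro n h1 h2
    have hcell : xs (n-1) < xs n := by
      have := hDs.hx (n-1) (by omega)
      rwa [show (n-1)+1 = n by omega] at this
    have hne : xs (n-1) - xs n ≠ 0 := ne_of_lt (by linarith)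
    have hq := hratio.1 n h1 h2
    rw [div_eq_div_iff hxsd hne] at hq
    rw [div_mul_eq_mul_div, eq_div_iff hxsd]
    linear_combination hq
  have hrcY : ∀ m, 1 ≤ m → m ≤ M →
      y m - y (m-1) = (y 0 - y M)/(ys 0 - ys M) * (ys m - ys (m-1)) := by
    intro m h1 h2
    have hcell : ys (m-1) < ys m := by
      have := hDs.hy (m-1) (by omega)
      rwa [show (m-1)+1 = m by omega] at this
    have hne : ys (m-1) - ys m ≠ 0 := ne_of_lt (by linarith)
    have hq := hratio.2 m h1 h2
    rw [div_eq_div_iff hysd hne] at hq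
    rw [div_mul_eq_mul_div, eq_div_iff hysd]
    linear_combination hq
  have hTel : ∀ i, i ≤ N → x i - x 0 = (x 0 - x N)/(xs 0 - xs N) * (xs i - xs 0) := by
    intro i
    induction i with
    | zero => intro _; simp
    | succ j ih =>
      intro hj
      have h1 := hrc (j+1) (by omega) hj
      rw [show (j+1)-1 = j by omega] at h1
      have h2 := ih (by omega)
      linear_combination h1 + h2
  have hTelY : ∀ i, i ≤ M → y i - y 0 = (y 0 - y M)/(ys 0 - ys M) * (ys i - ys 0) := by
    intro i
    induction i with
    | zero => intro _; simp
    | succ j ih =>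
      intro hj
      have h1 := hrcY (j+1) (by omega) hj
      rw [show (j+1)-1 = j by omega] at h1
      have h2 := ih (by omega)
      linear_combination h1 + h2
  -- the transfer equations for H := G ∘ L
  have hHeq : ∀ n m, 1 ≤ n → n ≤ N → 1 ≤ m → m ≤ M →
      ∀ X ∈ Icc (x 0) (x N), ∀ Y ∈ Icc (y 0) (y M),
        G₁ (xs 0 + ((phiMap N x n X) - x 0) * ((xs N - xs 0)/(x N - x 0)))
           (ys 0 + ((phiMap M y m Y) - y 0) * ((ys M - ys 0)/(y M - y 0)))
          = a n m * G₁ (xs 0 + (X - x 0) * ((xs N - xs 0)/(x N - x 0)))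
                       (ys 0 + (Y - y 0) * ((ys M - ys 0)/(y M - y 0)))
            + b n m * G₂ (xs 0 + (X - x 0) * ((xs N - xs 0)/(x N - x 0)))
                         (ys 0 + (Y - y 0) * ((ys M - ys 0)/(y M - y 0)))
            + pMap N M x y z t a b n m X Y ∧
        G₂ (xs 0 + ((phiMap N x n X) - x 0) * ((xs N - xs 0)/(x N - x 0)))
           (ys 0 + ((phiMap M y m Y) - y 0) * ((ys M - ys 0)/(y M - y 0)))
          = c n m * G₂ (xs 0 + (X - x 0) * ((xs N - xs 0)/(x N - x 0)))
                       (ys 0 + (Y - y 0) * ((ys M - ys 0)/(y M - y 0)))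
            + qMap N M x y t c n m X Y := by
    intro n m hn1 hnN hm1 hmM X hX Y hY
    have hphix : xs 0 + ((phiMap N x n X) - x 0) * ((xs N - xs 0)/(x N - x 0))
        = phiMap N xs n (xs 0 + (X - x 0) * ((xs N - xs 0)/(x N - x 0))) := by
      simp only [phiMap]
      exact phi_comp ((x 0 - x N)/(xs 0 - xs N)) (x 0) (x N) (xs 0) (xs N)
        (x (n-1)) (xs (n-1)) (x n) (xs n) X hr0 hxsNd hrN (hrc n hn1 hnN)
        (hTel (n-1) (by omega))
    have hphiy : ys 0 + ((phiMap M y m Y) - y 0) * ((ys M - ys 0)/(y M - y 0))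
        = phiMap M ys m (ys 0 + (Y - y 0) * ((ys M - ys 0)/(y M - y 0))) := by
      simp only [phiMap]
      exact phi_comp ((y 0 - y M)/(ys 0 - ys M)) (y 0) (y M) (ys 0) (ys M)
        (y (m-1)) (ys (m-1)) (y m) (ys m) Y hry0 hysMd hryM (hrcY m hm1 hmM)
        (hTelY (m-1) (by omega))
    have hmX : (xs 0 + (X - x 0) * ((xs N - xs 0)/(x N - x 0))) ∈ Icc (xs 0) (xs N) :=
      affine_mapsTo (x 0) (x N) (xs 0) (xs N) X hx0N hxs0N.le hX
    have hmY : (ys 0 + (Y - y 0) * ((ys M - ys 0)/(y M - y 0))) ∈ Icc (ys 0) (ys M) :=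
      affine_mapsTo (y 0) (y M) (ys 0) (ys M) Y hy0M hys0M.le hY
    have hGe := hG.2.2.2 n m hn1 hnN hm1 hmM _ hmX _ hmY
    rw [hphix, hphiy]
    constructor
    · rw [hGe.1, pMap_comp N M x y xs ys z t a b n m hxd hyd hxsd hysd X Y]
    · rw [hGe.2]
      simp only [qMap]
      rw [pMap_comp N M x y xs ys t t c (fun _ _ => 0) n m hxd hyd hxsd hysd X Y]
  -- continuity of H
  have hcont_inner : Continuous (fun P : ℝ × ℝ =>
      ((xs 0 + (P.1 - x 0) * ((xs N - xs 0)/(x N - x 0))),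
       (ys 0 + (P.2 - y 0) * ((ys M - ys 0)/(y M - y 0))))) := by
    apply Continuous.prodMk
    · exact continuous_const.add ((continuous_fst.sub continuous_const).mul continuous_const)
    · exact continuous_const.add ((continuous_snd.sub continuous_const).mul continuous_const)
  have hmaps : MapsTo (fun P : ℝ × ℝ =>
      ((xs 0 + (P.1 - x 0) * ((xs N - xs 0)/(x N - x 0))),
       (ys 0 + (P.2 - y 0) * ((ys M - ys 0)/(y M - y 0)))))
      (Icc (x 0) (x N) ×ˢ Icc (y 0) (y M)) (Icc (xs 0) (xs N) ×ˢ Icc (ys 0) (ys M)) := by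
    intro P hP
    exact ⟨affine_mapsTo (x 0) (x N) (xs 0) (xs N) P.1 hx0N hxs0N.le hP.1,
           affine_mapsTo (y 0) (y M) (ys 0) (ys M) P.2 hy0M hys0M.le hP.2⟩
  have hH1c : ContinuousOn (fun P : ℝ × ℝ =>
      G₁ (xs 0 + (P.1 - x 0) * ((xs N - xs 0)/(x N - x 0)))
         (ys 0 + (P.2 - y 0) * ((ys M - ys 0)/(y M - y 0))))
      (Icc (x 0) (x N) ×ˢ Icc (y 0) (y M)) :=
    hG.1.comp hcont_inner.continuousOn hmaps
  have hH2c : ContinuousOn (fun P : ℝ × ℝ =>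
      G₂ (xs 0 + (P.1 - x 0) * ((xs N - xs 0)/(x N - x 0)))
         (ys 0 + (P.2 - y 0) * ((ys M - ys 0)/(y M - y 0))))
      (Icc (x 0) (x N) ×ˢ Icc (y 0) (y M)) :=
    hG.2.1.comp hcont_inner.continuousOn hmaps
  -- uniqueness : F = G ∘ L on S
  have hEq := chfis_unique N M x y z t a b c hD F₁ F₂
    (fun X Y => G₁ (xs 0 + (X - x 0) * ((xs N - xs 0)/(x N - x 0)))
                   (ys 0 + (Y - y 0) * ((ys M - ys 0)/(y M - y 0))))
    (fun X Y => G₂ (xs 0 + (X - x 0) * ((xs N - xs 0)/(x N - x 0)))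
                   (ys 0 + (Y - y 0) * ((ys M - ys 0)/(y M - y 0))))
    (hF.1.sub hH1c) (hF.2.1.sub hH2c) hF.2.2.2 hHeq
  -- constants
  obtain ⟨hale, n₀, m₀, hn₀1, hn₀N, hm₀1, hm₀M, haeq⟩ := supParam_spec N M a hD.hN hD.hM
  obtain ⟨hble, n₁, m₁, hn₁1, hn₁N, hm₁1, hm₁M, hbeq⟩ := supParam_spec N M b hD.hN hD.hM
  obtain ⟨hcle, n₂, m₂, hn₂1, hn₂N, hm₂1, hm₂M, hceq⟩ := supParam_spec N M c hD.hN hD.hM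
  have hα0 : 0 ≤ supParam N M a := haeq ▸ abs_nonneg _
  have hβ0 : 0 ≤ supParam N M b := hbeq ▸ abs_nonneg _
  have hγ0 : 0 ≤ supParam N M c := hceq ▸ abs_nonneg _
  have hα1 : supParam N M a < 1 := haeq ▸ hD.ha n₀ m₀ hn₀1 hn₀N hm₀1 hm₀M
  have hγ1 : supParam N M c < 1 := by
    rw [hceq]
    have := hD.hbc n₂ m₂ hn₂1 hn₂N hm₂1 hm₂M
    have := abs_nonneg (b n₂ m₂)
    linarith
  have hC : 1 ≤ 2 * supParam N M b * supParam N M c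
      / ((1 - supParam N M a) * (1 - supParam N M c))
      + (1 + supParam N M a) / (1 - supParam N M a) := by
    have h1 : 0 ≤ 2 * supParam N M b * supParam N M c
        / ((1 - supParam N M a) * (1 - supParam N M c)) :=
      div_nonneg (by positivity) (le_of_lt (mul_pos (by linarith) (by linarith)))
    have h2 : 1 ≤ (1 + supParam N M a) / (1 - supParam N M a) :=
      (le_div_iff₀ (by linarith)).mpr (by linarith)
    linarith
  -- the main estimate
  intro X hX Y hY
  have hmem := hsub (show (X, Y) ∈ Icc (xs 0) (xs N) ×ˢ Icc (ys 0) (ys M) from ⟨hX, hY⟩)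
  set X₀ := x 0 + (X - xs 0) * ((x N - x 0)/(xs N - xs 0)) with hX₀def
  set Y₀ := y 0 + (Y - ys 0) * ((y M - y 0)/(ys M - ys 0)) with hY₀def
  have hX₀ : X₀ ∈ Icc (x 0) (x N) :=
    affine_mapsTo (xs 0) (xs N) (x 0) (x N) X hxs0N hx0N.le hX
  have hY₀ : Y₀ ∈ Icc (y 0) (y M) :=
    affine_mapsTo (ys 0) (ys M) (y 0) (y M) Y hys0M hy0M.le hY
  have hLX₀ : xs 0 + (X₀ - x 0) * ((xs N - xs 0)/(x N - x 0)) = X := by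
    rw [hX₀def]; field_simp; ring
  have hLY₀ : ys 0 + (Y₀ - y 0) * ((ys M - ys 0)/(y M - y 0)) = Y := by
    rw [hY₀def]; field_simp; ring
  have hGXY : F₁ X₀ Y₀ = G₁ X Y := by
    have h' : F₁ X₀ Y₀ = G₁ (xs 0 + (X₀ - x 0) * ((xs N - xs 0)/(x N - x 0)))
        (ys 0 + (Y₀ - y 0) * ((ys M - ys 0)/(y M - y 0))) := hEq X₀ hX₀ Y₀ hY₀
    rw [hLX₀, hLY₀] at h'
    exact h'
  -- bound |X - X₀|
  have hbX : |X - X₀| ≤ max |x 0 - xs 0| |x N - xs N| := by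
    have key := affine_abs_le (1 - (x N - x 0)/(xs N - xs 0))
      (xs 0 * ((x N - x 0)/(xs N - xs 0)) - x 0) (xs 0) (xs N) X hX.1 hX.2
    have e1 : (1 - (x N - x 0)/(xs N - xs 0)) * X
        + (xs 0 * ((x N - x 0)/(xs N - xs 0)) - x 0) = X - X₀ := by
      rw [hX₀def]; ring
    have e2 : (1 - (x N - x 0)/(xs N - xs 0)) * xs 0
        + (xs 0 * ((x N - x 0)/(xs N - xs 0)) - x 0) = xs 0 - x 0 := by ring
    have e3 : (1 - (x N - x 0)/(xs N - xs 0)) * xs N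
        + (xs 0 * ((x N - x 0)/(xs N - xs 0)) - x 0) = xs N - x N := by
      have hs : (x N - x 0)/(xs N - xs 0) * (xs N - xs 0) = x N - x 0 :=
        div_mul_cancel₀ _ hxsNd
      linear_combination -hs
    rw [e1, e2, e3] at key
    rwa [abs_sub_comm (xs 0) (x 0), abs_sub_comm (xs N) (x N)] at key
  have hbY : |Y - Y₀| ≤ max |y 0 - ys 0| |y M - ys M| := by
    have key := affine_abs_le (1 - (y M - y 0)/(ys M - ys 0))
      (ys 0 * ((y M - y 0)/(ys M - ys 0)) - y 0) (ys 0) (ys M) Y hY.1 hY.2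
    have e1 : (1 - (y M - y 0)/(ys M - ys 0)) * Y
        + (ys 0 * ((y M - y 0)/(ys M - ys 0)) - y 0) = Y - Y₀ := by
      rw [hY₀def]; ring
    have e2 : (1 - (y M - y 0)/(ys M - ys 0)) * ys 0
        + (ys 0 * ((y M - y 0)/(ys M - ys 0)) - y 0) = ys 0 - y 0 := by ring
    have e3 : (1 - (y M - y 0)/(ys M - ys 0)) * ys M
        + (ys 0 * ((y M - y 0)/(ys M - ys 0)) - y 0) = ys M - y M := by
      have hs : (y M - y 0)/(ys M - ys 0) * (ys M - ys 0) = y M - y 0 :=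
        div_mul_cancel₀ _ hysMd
      linear_combination -hs
    rw [e1, e2, e3] at key
    rwa [abs_sub_comm (ys 0) (y 0), abs_sub_comm (ys M) (y M)] at key
  -- Hölder + sup bound
  have hKhelp : ∀ n m : ℕ, n ≤ N → m ≤ M →
      |X - X₀| + |Y - Y₀| ≤ |x n - xs n| + |y m - ys m| →
      (|X - X₀| + |Y - Y₀|) ^ δ ≤ supKnotDiff N M x xs y ys δ := by
    intro n m hn hm hle
    calc (|X - X₀| + |Y - Y₀|) ^ δ ≤ (|x n - xs n| + |y m - ys m|) ^ δ :=
          Real.rpow_le_rpow (by positivity) hle hδ.1.le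
      _ ≤ supKnotDiff N M x xs y ys δ := supKnotDiff_spec N M x xs y ys δ n m hn hm
  have hsumK : (|X - X₀| + |Y - Y₀|) ^ δ ≤ supKnotDiff N M x xs y ys δ := by
    rcases max_cases |x 0 - xs 0| |x N - xs N| with ⟨he, _⟩ | ⟨he, _⟩ <;>
      rcases max_cases |y 0 - ys 0| |y M - ys M| with ⟨he', _⟩ | ⟨he', _⟩
    · exact hKhelp 0 0 (Nat.zero_le _) (Nat.zero_le _) (by rw [he] at hbX; rw [he'] at hbY; linarith)
    · exact hKhelp 0 M (Nat.zero_le _) le_rfl (by rw [he] at hbX; rw [he'] at hbY; linarith)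
    · exact hKhelp N 0 le_rfl (Nat.zero_le _) (by rw [he] at hbX; rw [he'] at hbY; linarith)
    · exact hKhelp N M le_rfl le_rfl (by rw [he] at hbX; rw [he'] at hbY; linarith)
  have hK0 : 0 ≤ supKnotDiff N M x xs y ys δ :=
    le_trans (Real.rpow_nonneg (by positivity) δ) hsumK
  have hHol : |F₁ X Y - F₁ X₀ Y₀| ≤ Mb * (|X - X₀| + |Y - Y₀|) ^ δ :=
    hH1 X hmem.1 Y hmem.2 X₀ hX₀ Y₀ hY₀
  rw [← hGXY]
  calc |F₁ X Y - F₁ X₀ Y₀| ≤ Mb * (|X - X₀| + |Y - Y₀|) ^ δ := hHol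
    _ ≤ Mb * supKnotDiff N M x xs y ys δ := mul_le_mul_of_nonneg_left hsumK hMb
    _ ≤ Mb * (2 * supParam N M b * supParam N M c
          / ((1 - supParam N M a) * (1 - supParam N M c))
        + (1 + supParam N M a) / (1 - supParam N M a))
        * supKnotDiff N M x xs y ys δ := by
          have h3 : Mb * supKnotDiff N M x xs y ys δ * 1
              ≤ Mb * supKnotDiff N M x xs y ys δ
                * (2 * supParam N M b * supParam N M c
                    / ((1 - supParam N M a) * (1 - supParam N M c))
                  + (1 + supParam N M a) / (1 - supParam N M a)) :=
            mul_le_mul_of_nonneg_left hC (mul_nonneg hMb hK0)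
          nlinarith [h3]

end
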